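/- arXiv:2206.11589 — 3 statements merged into one kernel-verified Lean document; each statement's English description precedes it below -/
import Mathlib

section
/- Let w₁,...,w_k be unit vectors in ℝ^d with 2 ≤ k ≤ d+1 forming a regular simplex (⟪w_i,w_j⟫ = −1/(k−1) for i ≠ j). Then for each i, setting z = w_i gives sample margin ⟪w_i,z⟫ − max_{j≠i}⟪w_j,z⟫ = k/(k−1), and this is the maximal possible value of min_i max_z (⟪w_i,z⟫ − max_{j≠i}⟪w_j,z⟫) over all configurations of unit vectors w₁,...,w_k. -/
open scoped RealInnerProductSpace BigOperators

theorem stmt6 {d k : ℕ} (hd : 2 ≤ d) (hk : 2 ≤ k) (hkd : k ≤ d + 1)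
    (w : Fin k → EuclideanSpace ℝ (Fin d))
    (hw : ∀ i, ‖w i‖ = 1)
    (hsimplex : ∀ i j, i ≠ j → ⟪w i, w j⟫ = -1 / ((k : ℝ) - 1))
    (hU : (Finset.univ : Finset (Fin k)).Nonempty)
    (hne : ∀ i : Fin k, (Finset.univ.erase i).Nonempty) :
    (∀ i : Fin k,
      ⟪w i, w i⟫ - (Finset.univ.erase i).sup' (hne i) (fun j => ⟪w j, w i⟫)
        = (k : ℝ) / ((k : ℝ) - 1)) ∧
    (∀ w' : Fin k → EuclideanSpace ℝ (Fin d), (∀ i, ‖w' i‖ = 1) →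
      (Finset.univ.inf' hU fun i =>
        sSup {m : ℝ | ∃ z : EuclideanSpace ℝ (Fin d), ‖z‖ = 1 ∧
          m = ⟪w' i, z⟫ - (Finset.univ.erase i).sup' (hne i) (fun j => ⟪w' j, z⟫)})
        ≤ (k : ℝ) / ((k : ℝ) - 1)) := by
  have hk2 : (2:ℝ) ≤ (k:ℝ) := by exact_mod_cast hk
  have hk1 : (0:ℝ) < (k:ℝ) - 1 := by linarith
  have hk0 : ((k:ℝ) - 1) ≠ 0 := ne_of_gt hk1
  constructor
  · intro i
    have h1 : ⟪w i, w i⟫ = 1 := by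
      rw [real_inner_self_eq_norm_sq, hw i]; norm_num
    have h2 : (Finset.univ.erase i).sup' (hne i) (fun j => ⟪w j, w i⟫)
        = -1/((k:ℝ)-1) := by
      rw [Finset.sup'_congr (hne i) rfl
        (fun j hj => hsimplex j i (Finset.ne_of_mem_erase hj))]
      exact Finset.sup'_const _ _
    rw [h1, h2]; field_simp; ring
  · intro w' hw'
    set s := ∑ j, w' j with hs
    obtain ⟨i, -, hi⟩ := Finset.exists_max_image Finset.univ (fun j => ⟪w' j, s⟫) hU
    have hsum : ∑ j, ⟪w' j, s⟫ = ‖s‖^2 := by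
      rw [← sum_inner, ← hs, real_inner_self_eq_norm_sq]
    have hcard : ((k:ℝ)) = (Finset.univ : Finset (Fin k)).card := by simp
    have his : ‖s‖^2 ≤ (k:ℝ) * ⟪w' i, s⟫ := by
      calc ‖s‖^2 = ∑ j, ⟪w' j, s⟫ := hsum.symm
        _ ≤ ∑ _j : Fin k, ⟪w' i, s⟫ :=
            Finset.sum_le_sum (fun j _ => hi j (Finset.mem_univ j))
        _ = (k:ℝ) * ⟪w' i, s⟫ := by
            rw [Finset.sum_const, nsmul_eq_mul]; simp
    have hnorm : ‖(k:ℝ) • w' i - s‖ ≤ (k:ℝ) := by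
      have hsq : ‖(k:ℝ) • w' i - s‖^2 ≤ (k:ℝ)^2 := by
        have he : ‖(k:ℝ) • w' i - s‖^2
            = (k:ℝ)^2 - 2*((k:ℝ)*⟪w' i, s⟫) + ‖s‖^2 := by
          rw [norm_sub_sq_real, real_inner_smul_left, norm_smul, hw' i,
            Real.norm_eq_abs, abs_of_nonneg (by positivity : (0:ℝ) ≤ (k:ℝ))]
          ring
        rw [he]
        nlinarith [sq_nonneg ‖s‖]
      nlinarith [norm_nonneg ((k:ℝ) • w' i - s)]
    refine le_trans (Finset.inf'_le _ (Finset.mem_univ i)) ?_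
    apply Real.sSup_le
    · rintro m ⟨z, hz, rfl⟩
      have hsup : (∑ j ∈ Finset.univ.erase i, ⟪w' j, z⟫)
          ≤ ((k:ℝ) - 1) * (Finset.univ.erase i).sup' (hne i) (fun j => ⟪w' j, z⟫) := by
        have := Finset.sum_le_card_nsmul (Finset.univ.erase i) (fun j => ⟪w' j, z⟫)
          ((Finset.univ.erase i).sup' (hne i) (fun j => ⟪w' j, z⟫))
          (fun j hj => Finset.le_sup' (fun j => ⟪w' j, z⟫) hj)
        rw [nsmul_eq_mul] at this
        have hc : ((Finset.univ.erase i).card : ℝ) = (k:ℝ) - 1 := by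
          rw [Finset.card_erase_of_mem (Finset.mem_univ i), Finset.card_univ,
            Fintype.card_fin, Nat.cast_sub (by omega)]
          simp
        rwa [hc] at this
      have hse : (∑ j ∈ Finset.univ.erase i, ⟪w' j, z⟫) = ⟪s, z⟫ - ⟪w' i, z⟫ := by
        rw [Finset.sum_erase_eq_sub (Finset.mem_univ i), ← sum_inner, ← hs]
      have hip : (k:ℝ) * ⟪w' i, z⟫ - ⟪s, z⟫ ≤ (k:ℝ) := by
        have h1 : ⟪(k:ℝ) • w' i - s, z⟫ ≤ ‖(k:ℝ) • w' i - s‖ * ‖z‖ :=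
          real_inner_le_norm _ _
        rw [hz, mul_one] at h1
        have h2 : ⟪(k:ℝ) • w' i - s, z⟫ = (k:ℝ) * ⟪w' i, z⟫ - ⟪s, z⟫ := by
          rw [inner_sub_left, inner_smul_left]; simp
        linarith
      rw [hse] at hsup
      rw [le_div_iff₀ hk1]
      nlinarith
    · positivity
end

section
/- Let w₁,...,w_k and z₁,...,z_N be unit vectors in ℝ^d with labels y : {1,...,N} → {1,...,k}, each label occurring at least once, and suppose 2 ≤ k ≤ d+1, d ≥ 2. Then min_i (⟪w_{y_i}, z_i⟫ − max_{j≠y_i} ⟪w_j, z_i⟫) ≤ k/(k−1), and equality holds iff ⟪w_i, w_j⟫ = −1/(k−1) for all i ≠ j and z_i = w_{y_i} for all i. -/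
open scoped RealInnerProductSpace BigOperators

theorem stmt15 {d k N : ℕ} (hd : 2 ≤ d) (hk : 2 ≤ k) (hkd : k ≤ d + 1)
    (w : Fin k → EuclideanSpace ℝ (Fin d))
    (z : Fin N → EuclideanSpace ℝ (Fin d))
    (y : Fin N → Fin k)
    (hw : ∀ j, ‖w j‖ = 1) (hz : ∀ i, ‖z i‖ = 1)
    (hy : Function.Surjective y)
    (hNU : (Finset.univ : Finset (Fin N)).Nonempty)
    (hne : ∀ j : Fin k, (Finset.univ.erase j).Nonempty) :
    (Finset.univ.inf' hNU (fun i =>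
        ⟪w (y i), z i⟫ -
          (Finset.univ.erase (y i)).sup' (hne (y i)) (fun j => ⟪w j, z i⟫))
      ≤ (k : ℝ) / ((k : ℝ) - 1)) ∧
    ((Finset.univ.inf' hNU (fun i =>
        ⟪w (y i), z i⟫ -
          (Finset.univ.erase (y i)).sup' (hne (y i)) (fun j => ⟪w j, z i⟫))
      = (k : ℝ) / ((k : ℝ) - 1)) ↔
      ((∀ i j : Fin k, i ≠ j → ⟪w i, w j⟫ = -1 / ((k : ℝ) - 1)) ∧
        ∀ i : Fin N, z i = w (y i))) := by
  have hk1 : (1:ℝ) < (k:ℝ) := by exact_mod_cast (by omega : 1 < k)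
  have hk1' : (0:ℝ) < (k:ℝ) - 1 := by linarith
  have hk0 : (0:ℝ) < (k:ℝ) := by linarith
  set S : EuclideanSpace ℝ (Fin d) := ∑ j, w j with hS
  set m : Fin N → ℝ := fun i =>
      ⟪w (y i), z i⟫ -
        (Finset.univ.erase (y i)).sup' (hne (y i)) (fun j => ⟪w j, z i⟫) with hm
  have hcardR : ∀ c : Fin k, (((Finset.univ : Finset (Fin k)).erase c).card : ℝ)
      = (k:ℝ) - 1 := by
    intro c
    rw [Finset.card_erase_of_mem (Finset.mem_univ c), Finset.card_univ, Fintype.card_fin]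
    have : 1 ≤ k := by omega
    push_cast [Nat.cast_sub this]
    ring
  have hsum_erase : ∀ (c : Fin k) (v : EuclideanSpace ℝ (Fin d)),
      ∑ j ∈ Finset.univ.erase c, ⟪w j, v⟫ = ⟪S, v⟫ - ⟪w c, v⟫ := by
    intro c v
    have h1 : ⟪S, v⟫ = ∑ j, ⟪w j, v⟫ := by rw [hS, sum_inner]
    have h2 : ⟪w c, v⟫ + ∑ j ∈ Finset.univ.erase c, ⟪w j, v⟫ = ∑ j, ⟪w j, v⟫ :=
      Finset.add_sum_erase _ (fun j => (⟪w j, v⟫ : ℝ)) (Finset.mem_univ c)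
    linarith
  -- per-sample bound via the average
  have key : ∀ i : Fin N,
      m i ≤ ((k:ℝ) * ⟪w (y i), z i⟫ - ⟪S, z i⟫) / ((k:ℝ) - 1) := by
    intro i
    set c := y i
    set sup := (Finset.univ.erase c).sup' (hne c) (fun j => ⟪w j, z i⟫) with hsup
    have h1 : ⟪S, z i⟫ - ⟪w c, z i⟫ ≤ ((k:ℝ) - 1) * sup := by
      have := Finset.sum_le_card_nsmul (Finset.univ.erase c) (fun j => ⟪w j, z i⟫) sup
        (fun j hj => Finset.le_sup' (fun j => (⟪w j, z i⟫ : ℝ)) hj)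
      rw [hsum_erase c (z i)] at this
      rw [← hcardR c]
      simpa [nsmul_eq_mul] using this
    have h2 : (⟪S, z i⟫ - ⟪w c, z i⟫) / ((k:ℝ) - 1) ≤ sup :=
      (div_le_iff₀ hk1').mpr (by linarith)
    have h3 : m i ≤ ⟪w c, z i⟫ - (⟪S, z i⟫ - ⟪w c, z i⟫) / ((k:ℝ) - 1) := by
      simp only [hm]
      linarith
    have h4 : ⟪w c, z i⟫ - (⟪S, z i⟫ - ⟪w c, z i⟫) / ((k:ℝ) - 1)
        = ((k:ℝ) * ⟪w c, z i⟫ - ⟪S, z i⟫) / ((k:ℝ) - 1) := by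
      field_simp
      ring
    linarith
  -- Cauchy-Schwarz form
  have key2 : ∀ i : Fin N, m i ≤ ‖(k:ℝ) • w (y i) - S‖ / ((k:ℝ) - 1) := by
    intro i
    refine (key i).trans (div_le_div_of_nonneg_right ?_ hk1'.le)
    have : (k:ℝ) * ⟪w (y i), z i⟫ - ⟪S, z i⟫ = ⟪(k:ℝ) • w (y i) - S, z i⟫ := by
      rw [inner_sub_left, real_inner_smul_left]
    rw [this]
    calc ⟪(k:ℝ) • w (y i) - S, z i⟫ ≤ ‖(k:ℝ) • w (y i) - S‖ * ‖z i‖ :=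
          real_inner_le_norm _ _
      _ = ‖(k:ℝ) • w (y i) - S‖ := by rw [hz i, mul_one]
  -- sum of squared norms identity
  have hnormsq : ∀ c : Fin k, ‖(k:ℝ) • w c - S‖^2
      = (k:ℝ)^2 - 2 * (k:ℝ) * ⟪w c, S⟫ + ‖S‖^2 := by
    intro c
    rw [norm_sub_sq_real, norm_smul, real_inner_smul_left]
    rw [hw c]
    simp [abs_of_pos hk0]
    ring
  have hsum_inner : ∑ c, ⟪w c, S⟫ = ‖S‖^2 := by
    rw [← sum_inner, ← hS, real_inner_self_eq_norm_sq]
  have sumnorm : ∑ c, ‖(k:ℝ) • w c - S‖^2 = (k:ℝ)^3 - (k:ℝ) * ‖S‖^2 := by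
    simp only [hnormsq]
    rw [Finset.sum_add_distrib, Finset.sum_sub_distrib, ← Finset.mul_sum, hsum_inner]
    simp [Finset.card_univ]
    ring
  have hkne : (Finset.univ : Finset (Fin k)).Nonempty := by
    refine ⟨⟨0, by omega⟩, Finset.mem_univ _⟩
  -- Part 1: the inequality
  have part1 : Finset.univ.inf' hNU m ≤ (k:ℝ) / ((k:ℝ) - 1) := by
    obtain ⟨c, _, hc⟩ := Finset.exists_le_of_sum_le (f := fun c => ‖(k:ℝ) • w c - S‖^2)
      (g := fun _ => (k:ℝ)^2) hkne (by
        rw [sumnorm, Finset.sum_const, Finset.card_univ, Fintype.card_fin, nsmul_eq_mul]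
        nlinarith [sq_nonneg ‖S‖])
    have hcnorm : ‖(k:ℝ) • w c - S‖ ≤ (k:ℝ) := by
      nlinarith [norm_nonneg ((k:ℝ) • w c - S)]
    obtain ⟨i0, hi0⟩ := hy c
    calc Finset.univ.inf' hNU m ≤ m i0 := Finset.inf'_le _ (Finset.mem_univ i0)
      _ ≤ ‖(k:ℝ) • w (y i0) - S‖ / ((k:ℝ) - 1) := key2 i0
      _ ≤ (k:ℝ) / ((k:ℝ) - 1) := by
          rw [hi0]
          exact div_le_div_of_nonneg_right hcnorm hk1'.le
  refine ⟨part1, ?_, ?_⟩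
  · -- forward direction of the iff
    intro hEq
    have hmge : ∀ i, (k:ℝ) / ((k:ℝ) - 1) ≤ m i := by
      intro i
      rw [← hEq]
      exact Finset.inf'_le _ (Finset.mem_univ i)
    have hnormge : ∀ c : Fin k, (k:ℝ) ≤ ‖(k:ℝ) • w c - S‖ := by
      intro c
      obtain ⟨i, rfl⟩ := hy c
      have h := (hmge i).trans (key2 i)
      exact (div_le_div_iff_of_pos_right hk1').mp h
    have hS0 : S = 0 := by
      have hlow : ∀ c : Fin k, (k:ℝ)^2 ≤ ‖(k:ℝ) • w c - S‖^2 := by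
        intro c
        nlinarith [hnormge c, norm_nonneg ((k:ℝ) • w c - S)]
      have hsumlow : ∑ _c : Fin k, (k:ℝ)^2 ≤ ∑ c, ‖(k:ℝ) • w c - S‖^2 :=
        Finset.sum_le_sum fun c _ => hlow c
      rw [sumnorm, Finset.sum_const, Finset.card_univ, Fintype.card_fin, nsmul_eq_mul] at hsumlow
      have hS2 : ‖S‖^2 ≤ 0 := by nlinarith
      have : ‖S‖ = 0 := by nlinarith [norm_nonneg S, sq_nonneg ‖S‖]
      exact norm_eq_zero.mp this
    have hz_eq : ∀ i : Fin N, z i = w (y i) := by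
      intro i
      have h1 := (hmge i).trans (key i)
      rw [hS0] at h1
      simp only [inner_zero_left, sub_zero] at h1
      have h2 : (k:ℝ) ≤ (k:ℝ) * ⟪w (y i), z i⟫ := (div_le_div_iff_of_pos_right hk1').mp h1
      have h3 : (1:ℝ) ≤ ⟪w (y i), z i⟫ := by
        nlinarith
      have h4 : ⟪w (y i), z i⟫ ≤ 1 := by
        calc ⟪w (y i), z i⟫ ≤ ‖w (y i)‖ * ‖z i‖ := real_inner_le_norm _ _
          _ = 1 := by rw [hw, hz, mul_one]
      have h5 : ⟪w (y i), z i⟫ = 1 := le_antisymm h4 h3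
      exact ((inner_eq_one_iff_of_norm_eq_one (hw (y i)) (hz i)).mp h5).symm
    refine ⟨?_, hz_eq⟩
    intro a b hab
    obtain ⟨i, hib⟩ := hy b
    subst hib
    -- the margin of sample i, with z i = w (y i)
    have hzib : z i = w (y i) := hz_eq i
    have hself : ⟪w (y i), z i⟫ = 1 := by
      rw [hzib, real_inner_self_eq_norm_sq, hw (y i)]; norm_num
    set sup := (Finset.univ.erase (y i)).sup' (hne (y i)) (fun j => ⟪w j, z i⟫) with hsup
    have hmi : m i = ⟪w (y i), z i⟫ - sup := by simp only [hm, hsup]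
    have hsum : ∑ j ∈ Finset.univ.erase (y i), ⟪w j, z i⟫ = -1 := by
      rw [hsum_erase (y i) (z i), hS0, hself]
      simp
    have hsup_le : sup ≤ -1 / ((k:ℝ) - 1) := by
      have := hmge i
      rw [hmi, hself] at this
      have h6 : 1 - (k:ℝ) / ((k:ℝ) - 1) = -1 / ((k:ℝ) - 1) := by
        field_simp
        ring
      linarith
    have hterm_le : ∀ j ∈ Finset.univ.erase (y i), ⟪w j, z i⟫ ≤ -1 / ((k:ℝ) - 1) := by
      intro j hj
      exact (Finset.le_sup' (fun j => (⟪w j, z i⟫ : ℝ)) hj).trans hsup_le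
    have heqsum : ∑ j ∈ Finset.univ.erase (y i), ⟪w j, z i⟫
        = ∑ j ∈ Finset.univ.erase (y i), (-1 / ((k:ℝ) - 1)) := by
      rw [hsum, Finset.sum_const, nsmul_eq_mul, hcardR (y i)]
      field_simp
    have hall := (Finset.sum_eq_sum_iff_of_le hterm_le).mp heqsum
    have hab' : a ∈ Finset.univ.erase (y i) := Finset.mem_erase.mpr ⟨hab, Finset.mem_univ a⟩
    have := hall a hab'
    rwa [hzib] at this
  · -- reverse direction of the iff
    rintro ⟨H1, H2⟩
    have hmi : ∀ i : Fin N, m i = (k:ℝ) / ((k:ℝ) - 1) := by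
      intro i
      have hself : ⟪w (y i), z i⟫ = 1 := by
        rw [H2 i, real_inner_self_eq_norm_sq, hw]; norm_num
      have hsup : (Finset.univ.erase (y i)).sup' (hne (y i)) (fun j => ⟪w j, z i⟫)
          = -1 / ((k:ℝ) - 1) := by
        have hcongr : ∀ j ∈ Finset.univ.erase (y i), ⟪w j, z i⟫ = -1 / ((k:ℝ) - 1) := by
          intro j hj
          rw [H2 i]
          exact H1 j (y i) (Finset.ne_of_mem_erase hj)
        rw [Finset.sup'_congr (hne (y i)) rfl hcongr, Finset.sup'_const]
      simp only [hm, hself, hsup]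
      field_simp
      ring
    have h1 : Finset.univ.inf' hNU m ≤ (k:ℝ) / ((k:ℝ) - 1) := by
      obtain ⟨i, hi⟩ := hNU
      exact (Finset.inf'_le _ hi).trans_eq (hmi i)
    have h2 : (k:ℝ) / ((k:ℝ) - 1) ≤ Finset.univ.inf' hNU m :=
      Finset.le_inf' _ _ fun i _ => (hmi i).ge
    linarith
end

section
/- Let w₁,...,w_k, z₁,...,z_N be unit vectors in ℝ^d, class-balanced (each class j ∈ {1,...,k} has exactly N/k samples), 2 ≤ k ≤ d+1, d ≥ 2. Then the empirical sample-margin risk (1/N)∑_{i=1}^N (−⟪w_{y_i}, z_i⟫ + max_{j≠y_i} ⟪w_j, z_i⟫) ≥ −k/(k−1), with equality iff ⟪w_i, w_j⟫ = −1/(k−1) for all i ≠ j and z_i = w_{y_i} for all i. -/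
open scoped RealInnerProductSpace BigOperators

set_option maxHeartbeats 1000000 in
theorem stmt19 {d k N : ℕ} (hd : 2 ≤ d) (hk : 2 ≤ k) (hkd : k ≤ d + 1)
    (hN : 1 ≤ N)
    (w : Fin k → EuclideanSpace ℝ (Fin d))
    (z : Fin N → EuclideanSpace ℝ (Fin d))
    (y : Fin N → Fin k)
    (hw : ∀ j, ‖w j‖ = 1) (hz : ∀ i, ‖z i‖ = 1)
    (hbal : ∀ j : Fin k, ((Finset.univ : Finset (Fin N)).filter
        (fun i => y i = j)).card * k = N)
    (hne : ∀ j : Fin k, (Finset.univ.erase j).Nonempty) :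
    ((1 / (N : ℝ)) * ∑ i, (-⟪w (y i), z i⟫ +
        (Finset.univ.erase (y i)).sup' (hne (y i)) (fun j => ⟪w j, z i⟫))
      ≥ -(k : ℝ) / ((k : ℝ) - 1)) ∧
    ((1 / (N : ℝ)) * ∑ i, (-⟪w (y i), z i⟫ +
        (Finset.univ.erase (y i)).sup' (hne (y i)) (fun j => ⟪w j, z i⟫))
      = -(k : ℝ) / ((k : ℝ) - 1) ↔
      ((∀ i j : Fin k, i ≠ j → ⟪w i, w j⟫ = -1 / ((k : ℝ) - 1)) ∧
        ∀ i : Fin N, z i = w (y i))) := by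
  classical
  have hk2 : (2:ℝ) ≤ (k:ℝ) := by exact_mod_cast hk
  have hc : (0:ℝ) < (k:ℝ) - 1 := by linarith
  have hc0 : ((k:ℝ) - 1) ≠ 0 := ne_of_gt hc
  have hk0 : (0:ℝ) < (k:ℝ) := by linarith
  have hN0 : (0:ℝ) < (N:ℝ) := by exact_mod_cast hN
  set S : EuclideanSpace ℝ (Fin d) := ∑ m, w m with hS
  set v : Fin k → EuclideanSpace ℝ (Fin d) := fun j => S - (k:ℝ) • w j with hv
  set f : Fin N → ℝ := fun i => -⟪w (y i), z i⟫ +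
      (Finset.univ.erase (y i)).sup' (hne (y i)) (fun j => ⟪w j, z i⟫) with hf
  -- cardinality of erase
  have hcard : ∀ m : Fin k, (((Finset.univ : Finset (Fin k)).erase m).card : ℝ)
      = (k:ℝ) - 1 := by
    intro m
    rw [Finset.card_erase_of_mem (Finset.mem_univ m), Finset.card_univ, Fintype.card_fin,
      Nat.cast_sub (by omega), Nat.cast_one]
  -- sum over erase
  have hsum_erase : ∀ (m : Fin k) (ζ : EuclideanSpace ℝ (Fin d)),
      ∑ j ∈ Finset.univ.erase m, ⟪w j, ζ⟫ = ⟪S, ζ⟫ - ⟪w m, ζ⟫ := by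
    intro m ζ
    have h1 : ∑ j, ⟪w j, ζ⟫ = ⟪S, ζ⟫ := by rw [hS, sum_inner]
    rw [eq_sub_iff_add_eq, ← h1, Finset.sum_erase_add _ _ (Finset.mem_univ m)]
  have hinnerv : ∀ (m : Fin k) (ζ : EuclideanSpace ℝ (Fin d)),
      ⟪v m, ζ⟫ = ⟪S, ζ⟫ - (k:ℝ) * ⟪w m, ζ⟫ := by
    intro m ζ
    rw [show v m = S - (k:ℝ) • w m from rfl, inner_sub_left, real_inner_smul_left]
  -- per-sample lower bound via the average
  have hterm_ge : ∀ i, ⟪v (y i), z i⟫ / ((k:ℝ) - 1) ≤ f i := by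
    intro i
    have hle : ∀ j ∈ Finset.univ.erase (y i), ⟪w j, z i⟫ ≤
        (Finset.univ.erase (y i)).sup' (hne (y i)) (fun j => ⟪w j, z i⟫) :=
      fun j hj => Finset.le_sup' (fun j => ⟪w j, z i⟫) hj
    have h2 : ∑ j ∈ Finset.univ.erase (y i), ⟪w j, z i⟫ ≤
        ((k:ℝ) - 1) * (Finset.univ.erase (y i)).sup' (hne (y i)) (fun j => ⟪w j, z i⟫) := by
      calc ∑ j ∈ Finset.univ.erase (y i), ⟪w j, z i⟫
          ≤ ∑ _j ∈ Finset.univ.erase (y i),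
            (Finset.univ.erase (y i)).sup' (hne (y i)) (fun j => ⟪w j, z i⟫) :=
            Finset.sum_le_sum hle
        _ = _ := by rw [Finset.sum_const, nsmul_eq_mul, hcard]
    rw [hsum_erase] at h2
    rw [div_le_iff₀ hc, hinnerv]
    simp only [hf]
    nlinarith [h2]
  have hinner_ge : ∀ i, -‖v (y i)‖ ≤ ⟪v (y i), z i⟫ := by
    intro i
    have h1 := real_inner_le_norm (-(v (y i))) (z i)
    rw [inner_neg_left, norm_neg, hz i, mul_one] at h1
    linarith
  -- sum of squared norms
  have hVsq : ∑ j, ‖v j‖^2 = (k:ℝ)^3 - (k:ℝ) * ‖S‖^2 := by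
    have hexp : ∀ j, ‖v j‖^2 = ‖S‖^2 - 2*(k:ℝ)*⟪S, w j⟫ + (k:ℝ)^2 := by
      intro j
      rw [show v j = S - (k:ℝ) • w j from rfl, norm_sub_sq_real, real_inner_smul_right,
        norm_smul]
      simp [hw j, Real.norm_eq_abs, abs_of_nonneg (le_of_lt hk0)]
      ring
    have hSw : ∑ j, ⟪S, w j⟫ = ‖S‖^2 := by
      rw [← inner_sum, ← hS, real_inner_self_eq_norm_sq]
    rw [Finset.sum_congr rfl (fun j _ => hexp j)]
    simp only [Finset.sum_add_distrib, Finset.sum_sub_distrib, Finset.sum_const,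
      ← Finset.mul_sum, hSw, Finset.card_univ, Fintype.card_fin, nsmul_eq_mul]
    ring
  -- Cauchy-Schwarz
  have hcs : (∑ j, ‖v j‖)^2 ≤ (k:ℝ) * ∑ j, ‖v j‖^2 := by
    have := sq_sum_le_card_mul_sum_sq (s := (Finset.univ : Finset (Fin k)))
      (f := fun j => ‖v j‖)
    simpa [Finset.card_univ, Fintype.card_fin] using this
  have hVnonneg : (0:ℝ) ≤ ∑ j, ‖v j‖ := Finset.sum_nonneg fun j _ => norm_nonneg _
  have hVle : ∑ j, ‖v j‖ ≤ (k:ℝ)^2 := by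
    nlinarith [hcs, hVsq, sq_nonneg (‖S‖), hVnonneg]
  -- fiberwise sum
  have hfib : ∀ F : Fin k → ℝ, (k:ℝ) * ∑ i, F (y i) = (N:ℝ) * ∑ j, F j := by
    intro F
    have h1 : ∑ j, ∑ _i ∈ Finset.univ.filter (fun i => y i = j), F j = ∑ i, F (y i) :=
      Finset.sum_fiberwise_of_maps_to' (fun i _ => Finset.mem_univ _) F
    have h2 : ∀ j : Fin k, (k:ℝ) * ∑ _i ∈ Finset.univ.filter (fun i => y i = j), F j
        = (N:ℝ) * F j := by
      intro j
      rw [Finset.sum_const, nsmul_eq_mul]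
      have hcast : ((Finset.univ.filter (fun i => y i = j)).card : ℝ) * (k:ℝ) = (N:ℝ) := by
        exact_mod_cast congrArg (Nat.cast : ℕ → ℝ) (hbal j)
      rw [← hcast]; ring
    rw [← h1, Finset.mul_sum, Finset.sum_congr rfl (fun j _ => h2 j), ← Finset.mul_sum]
  have hfibv : ∑ i, ‖v (y i)‖ ≤ (N:ℝ) * (k:ℝ) := by
    have h1 := hfib (fun j => ‖v j‖)
    have h2 : (N:ℝ) * ∑ j, ‖v j‖ ≤ (N:ℝ) * (k:ℝ)^2 :=
      mul_le_mul_of_nonneg_left hVle (le_of_lt hN0)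
    nlinarith [h1, h2]
  have hMsum_div : ∑ i, (-‖v (y i)‖ / ((k:ℝ) - 1))
      = -(∑ i, ‖v (y i)‖) / ((k:ℝ) - 1) := by
    rw [← Finset.sum_div, Finset.sum_neg_distrib]
  -- main inequality on the sum
  have hM_le : ∀ i ∈ (Finset.univ : Finset (Fin N)),
      -‖v (y i)‖ / ((k:ℝ) - 1) ≤ f i := by
    intro i _
    refine le_trans ?_ (hterm_ge i)
    gcongr
    exact hinner_ge i
  have hsum_ge : -((N:ℝ) * (k:ℝ)) / ((k:ℝ) - 1) ≤ ∑ i, f i := by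
    have h1 : ∑ i, (-‖v (y i)‖ / ((k:ℝ) - 1)) ≤ ∑ i, f i :=
      Finset.sum_le_sum hM_le
    rw [hMsum_div] at h1
    refine le_trans ?_ h1
    rw [div_le_div_iff₀ hc hc]
    nlinarith [hfibv]
  have hmain : -(k:ℝ) / ((k:ℝ) - 1) ≤ (1 / (N : ℝ)) * ∑ i, f i := by
    have h1 : (1 / (N:ℝ)) * (-((N:ℝ) * (k:ℝ)) / ((k:ℝ) - 1)) = -(k:ℝ) / ((k:ℝ) - 1) := by
      field_simp
    rw [← h1]
    apply mul_le_mul_of_nonneg_left hsum_ge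
    positivity
  refine ⟨hmain, ?_, ?_⟩
  · -- equality implies structure
    intro heq
    have hT : ∑ i, f i = (N:ℝ) * (-(k:ℝ) / ((k:ℝ) - 1)) := by
      rw [← heq]; field_simp
    have hMsum : ∑ i, (-‖v (y i)‖ / ((k:ℝ) - 1)) = ∑ i, f i := by
      have hle1 : ∑ i, (-‖v (y i)‖ / ((k:ℝ) - 1)) ≤ ∑ i, f i :=
        Finset.sum_le_sum hM_le
      have hge1 : ∑ i, f i ≤ ∑ i, (-‖v (y i)‖ / ((k:ℝ) - 1)) := by
        rw [hMsum_div, hT, show (N:ℝ) * (-(k:ℝ) / ((k:ℝ) - 1))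
          = -((N:ℝ) * (k:ℝ)) / ((k:ℝ) - 1) by ring, div_le_div_iff₀ hc hc]
        nlinarith [hfibv]
      linarith
    have hpt : ∀ i ∈ (Finset.univ : Finset (Fin N)),
        -‖v (y i)‖ / ((k:ℝ) - 1) = f i :=
      (Finset.sum_eq_sum_iff_of_le hM_le).1 hMsum
    -- total norm sum equals N*k
    have hnormsum : ∑ i, ‖v (y i)‖ = (N:ℝ) * (k:ℝ) := by
      have h1 := hMsum
      rw [hMsum_div, hT] at h1
      rcases (by field_simp at h1; exact Or.inl (by linarith) :
        ∑ i, ‖v (y i)‖ = (N:ℝ) * (k:ℝ) ∨ ((k:ℝ) - 1) = 0) with h2 | h2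
      · exact h2
      · exact absurd h2 hc0
    have hVeq : ∑ j, ‖v j‖ = (k:ℝ)^2 := by
      have h1 := hfib (fun j => ‖v j‖)
      rw [hnormsum] at h1
      have h2 : (N:ℝ) * ∑ j, ‖v j‖ = (N:ℝ) * (k:ℝ)^2 := by linear_combination (-1:ℝ) * h1
      exact mul_left_cancel₀ (ne_of_gt hN0) h2
    have hS0 : S = 0 := by
      have e1 : (k:ℝ)^4 ≤ (k:ℝ)*((k:ℝ)^3 - (k:ℝ)*‖S‖^2) := by
        rw [← hVsq]
        calc (k:ℝ)^4 = ((k:ℝ)^2)^2 := by ring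
          _ = (∑ j, ‖v j‖)^2 := by rw [hVeq]
          _ ≤ _ := hcs
      have h1 : ‖S‖^2 ≤ 0 := by
        nlinarith [e1, sq_nonneg ‖S‖, hk2,
          mul_nonneg (mul_nonneg (sub_nonneg.2 hk2)
            (by linarith : (0:ℝ) ≤ (k:ℝ)+2)) (sq_nonneg ‖S‖)]
      have h2 : ‖S‖^2 = 0 := le_antisymm h1 (sq_nonneg _)
      have h3 : ‖S‖ = 0 := by
        have := sq_eq_zero_iff.1 h2
        exact this
      exact norm_eq_zero.1 h3
    have hvnorm : ∀ j, ‖v j‖ = (k:ℝ) := by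
      intro j
      rw [show v j = S - (k:ℝ) • w j from rfl, hS0, zero_sub, norm_neg, norm_smul]
      simp [hw j, Real.norm_eq_abs, abs_of_nonneg (le_of_lt hk0)]
    have hwz1 : ∀ i, ⟪w (y i), z i⟫ = 1 := by
      intro i
      have h1 := hpt i (Finset.mem_univ i)
      have h4 : ⟪v (y i), z i⟫ = -‖v (y i)‖ := by
        have h5 : ⟪v (y i), z i⟫ / ((k:ℝ) - 1) ≤ -‖v (y i)‖ / ((k:ℝ) - 1) := by
          rw [h1]; exact hterm_ge i
        rw [div_le_div_iff₀ hc hc] at h5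
        have h6 := hinner_ge i
        nlinarith [h5, h6]
      have h7 : ⟪v (y i), z i⟫ = -(k:ℝ) * ⟪w (y i), z i⟫ := by
        rw [hinnerv, hS0, inner_zero_left]; ring
      rw [h7, hvnorm] at h4
      have : (k:ℝ) * ⟪w (y i), z i⟫ = (k:ℝ) * 1 := by linarith
      exact mul_left_cancel₀ (ne_of_gt hk0) this
    have hzw : ∀ i, z i = w (y i) := by
      intro i
      have h8 : ‖z i - w (y i)‖^2 = 0 := by
        rw [norm_sub_sq_real, real_inner_comm, hwz1 i, hz i, hw (y i)]
        ring
      have h9 : z i - w (y i) = 0 := norm_eq_zero.1 (sq_eq_zero_iff.1 h8)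
      exact sub_eq_zero.1 h9
    refine ⟨?_, hzw⟩
    -- pairwise inner products
    have hclass : ∀ m : Fin k, ∃ i, y i = m := by
      intro m
      by_contra h
      push_neg at h
      have h1 : (Finset.univ.filter (fun i => y i = m)) = ∅ :=
        Finset.filter_eq_empty_iff.2 (fun i _ => h i)
      have h2 := hbal m
      rw [h1] at h2
      simp at h2
      omega
    intro a b hab
    obtain ⟨i, hi⟩ := hclass b
    have hzi : z i = w b := by rw [hzw i, hi]
    have hfi : f i = -(k:ℝ) / ((k:ℝ) - 1) := by
      rw [← hpt i (Finset.mem_univ i), hvnorm]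
    have hsup : (Finset.univ.erase (y i)).sup' (hne (y i)) (fun j => ⟪w j, z i⟫)
        = -1 / ((k:ℝ) - 1) := by
      have h10 : -⟪w (y i), z i⟫ +
          (Finset.univ.erase (y i)).sup' (hne (y i)) (fun j => ⟪w j, z i⟫)
          = -(k:ℝ) / ((k:ℝ) - 1) := hfi
      have h11 := hwz1 i
      have h12 : -(1:ℝ) / ((k:ℝ) - 1) = -(k:ℝ) / ((k:ℝ) - 1) + 1 := by
        field_simp
        ring
      linarith
    have hle2 : ∀ j ∈ Finset.univ.erase (y i), ⟪w j, z i⟫ ≤ -1 / ((k:ℝ) - 1) :=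
      fun j hj => hsup ▸ Finset.le_sup' (fun j => ⟪w j, z i⟫) hj
    have hsum2 : ∑ j ∈ Finset.univ.erase (y i), ⟪w j, z i⟫
        = ∑ _j ∈ Finset.univ.erase (y i), (-1 / ((k:ℝ) - 1)) := by
      rw [hsum_erase, hS0, inner_zero_left, hwz1 i, Finset.sum_const, nsmul_eq_mul, hcard]
      field_simp
      ring
    have hall := (Finset.sum_eq_sum_iff_of_le hle2).1 hsum2
    have hamem : a ∈ Finset.univ.erase (y i) := by
      rw [hi]; exact Finset.mem_erase.2 ⟨hab, Finset.mem_univ a⟩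
    have := hall a hamem
    rw [hzi] at this
    exact this
  · -- structure implies equality
    rintro ⟨h1, h2⟩
    have hterm : ∀ i, f i = -(k:ℝ) / ((k:ℝ) - 1) := by
      intro i
      have hconst : ∀ j ∈ Finset.univ.erase (y i), ⟪w j, z i⟫ = -1 / ((k:ℝ) - 1) := by
        intro j hj
        rw [h2 i]
        exact h1 j (y i) (Finset.ne_of_mem_erase hj)
      have hsup : (Finset.univ.erase (y i)).sup' (hne (y i)) (fun j => ⟪w j, z i⟫)
          = -1 / ((k:ℝ) - 1) := by
        rw [Finset.sup'_congr (hne (y i)) rfl hconst, Finset.sup'_const]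
      simp only [hf]
      rw [hsup, h2 i, real_inner_self_eq_norm_sq, hw]
      field_simp
      ring
    have hsum : ∑ i, f i = (N:ℝ) * (-(k:ℝ) / ((k:ℝ) - 1)) := by
      rw [Finset.sum_congr rfl (fun i _ => hterm i), Finset.sum_const, Finset.card_univ,
        Fintype.card_fin, nsmul_eq_mul]
    rw [hsum]
    field_simp
end
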